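/- Let q = 3 and x ∈ F_3^{n-1} satisfy the constraints σ(x) = μ, where σ(x_0,...,x_{n-2}) = (x_0+x_1+x_2, x_3+x_4+x_5, ..., x_{n-4}+x_{n-3}+x_{n-2}). Suppose λ : σ^{-1}(μ) → Z/3 satisfies λ(x) ≠ λ(y) whenever d(x,y) = 2. Then λ(x) = λ(x + e) where e = (1,1,1,0,...,0), i.e., λ is invariant under adding 1 to all three coordinates of any block. -/

import Mathlib

/-- The fiber `σ⁻¹(μ)`: tuples in `F_3^{3t}` whose `j`-th block of three consecutive
coordinates sums to `μ_j`. -/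
def sigmaFiber (t : ℕ) (μ : Fin t → ZMod 3) : Set (Fin (3 * t) → ZMod 3) :=
  {x | ∀ j : Fin t,
    x ⟨3 * j.1, by have := j.2; omega⟩ + x ⟨3 * j.1 + 1, by have := j.2; omega⟩ +
      x ⟨3 * j.1 + 2, by have := j.2; omega⟩ = μ j}

/-- The vector with `1` on the three coordinates of the `j`-th block and `0` elsewhere. -/
def blockVec (t : ℕ) (j : Fin t) : Fin (3 * t) → ZMod 3 :=
  fun k => if 3 * j.1 ≤ k.1 ∧ k.1 < 3 * j.1 + 3 then 1 else 0

lemma ham_two {n : ℕ} (x y : Fin n → ZMod 3) (a b : Fin n) (hab : a ≠ b)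
    (h : ∀ k, x k ≠ y k ↔ k = a ∨ k = b) : hammingDist x y = 2 := by
  have hf : (Finset.univ.filter fun k => x k ≠ y k) = {a, b} := by
    ext k
    simp [h k]
  simp [hammingDist, hf, Finset.card_insert_of_notMem, hab]

lemma zmod3_aux : ∀ A B C D : ZMod 3,
    A ≠ B → A ≠ C → D ≠ B → D ≠ C → B ≠ C → A = D := by
  intro A B C D
  revert A B C D; unfold ZMod; decide

set_option maxHeartbeats 1000000 in
/-- If `λ : σ⁻¹(μ) → Z/3` takes distinct values on tuples of the fiber at
Hamming distance 2, then `λ(x) = λ(x + e)` for `e = (1,1,1,0,…,0)`; i.e., `λ` is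
invariant under adding `1` to all three coordinates of any block. -/
theorem stmt_16 (t : ℕ) (μ : Fin t → ZMod 3)
    (lam : (Fin (3 * t) → ZMod 3) → ZMod 3)
    (hlam : ∀ x ∈ sigmaFiber t μ, ∀ y ∈ sigmaFiber t μ,
      hammingDist x y = 2 → lam x ≠ lam y) :
    ∀ x ∈ sigmaFiber t μ, ∀ j : Fin t, lam (x + blockVec t j) = lam x := by
  intro x hx j
  have hjt := j.2
  obtain ⟨c, hcv⟩ : ∃ k : Fin (3 * t), k.1 = 3 * j.1 := ⟨⟨3 * j.1, by omega⟩, rfl⟩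
  obtain ⟨a, hav⟩ : ∃ k : Fin (3 * t), k.1 = 3 * j.1 + 1 := ⟨⟨3 * j.1 + 1, by omega⟩, rfl⟩
  obtain ⟨b, hbv⟩ : ∃ k : Fin (3 * t), k.1 = 3 * j.1 + 2 := ⟨⟨3 * j.1 + 2, by omega⟩, rfl⟩
  have hca : c ≠ a := by simp only [ne_eq, Fin.ext_iff]; omega
  have hcb : c ≠ b := by simp only [ne_eq, Fin.ext_iff]; omega
  have hab : a ≠ b := by simp only [ne_eq, Fin.ext_iff]; omega
  set x' : Fin (3 * t) → ZMod 3 := x + blockVec t j with hx'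
  set y1 : Fin (3 * t) → ZMod 3 :=
    fun k => if k = a then x a + 1 else if k = b then x b + 2 else x k with hy1
  set y2 : Fin (3 * t) → ZMod 3 :=
    fun k => if k = a then x a + 2 else if k = b then x b + 1 else x k with hy2
  -- values of x' on and off the block
  have hx'c : x' c = x c + 1 := by
    simp only [hx', Pi.add_apply, blockVec]
    rw [if_pos (by omega)]
  have hx'a : x' a = x a + 1 := by
    simp only [hx', Pi.add_apply, blockVec]
    rw [if_pos (by omega)]
  have hx'b : x' b = x b + 1 := by
    simp only [hx', Pi.add_apply, blockVec]
    rw [if_pos (by omega)]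
  have hx'k : ∀ k : Fin (3 * t), k ≠ c → k ≠ a → k ≠ b → x' k = x k := by
    intro k h1 h2 h3
    simp only [ne_eq, Fin.ext_iff] at h1 h2 h3
    simp only [hx', Pi.add_apply, blockVec]
    rw [if_neg (by omega)]
    ring
  -- values of y1, y2
  have hy1a : y1 a = x a + 1 := by simp [hy1]
  have hy1b : y1 b = x b + 2 := by simp [hy1, Ne.symm hab]
  have hy1k : ∀ k : Fin (3 * t), k ≠ a → k ≠ b → y1 k = x k := by
    intro k h1 h2; simp [hy1, h1, h2]
  have hy2a : y2 a = x a + 2 := by simp [hy2]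
  have hy2b : y2 b = x b + 1 := by simp [hy2, Ne.symm hab]
  have hy2k : ∀ k : Fin (3 * t), k ≠ a → k ≠ b → y2 k = x k := by
    intro k h1 h2; simp [hy2, h1, h2]
  have plus1 : ∀ u : ZMod 3, u ≠ u + 1 := by decide
  have plus2 : ∀ u : ZMod 3, u ≠ u + 2 := by decide
  have p12 : ∀ u : ZMod 3, u + 1 ≠ u + 2 := by decide
  have p21 : ∀ u : ZMod 3, u + 2 ≠ u + 1 := by decide
  have sum12 : ∀ u v w : ZMod 3, u + (v + 1) + (w + 2) = u + v + w := by decide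
  have sum21 : ∀ u v w : ZMod 3, u + (v + 2) + (w + 1) = u + v + w := by decide
  have sum111 : ∀ u v w : ZMod 3, (u + 1) + (v + 1) + (w + 1) = u + v + w := by decide
  -- equality of block indices with c, a, b
  have ec : ∀ (h : 3 * j.1 < 3 * t), (⟨3 * j.1, h⟩ : Fin (3 * t)) = c :=
    fun h => Fin.ext hcv.symm
  have ea : ∀ (h : 3 * j.1 + 1 < 3 * t), (⟨3 * j.1 + 1, h⟩ : Fin (3 * t)) = a :=
    fun h => Fin.ext hav.symm
  have eb : ∀ (h : 3 * j.1 + 2 < 3 * t), (⟨3 * j.1 + 2, h⟩ : Fin (3 * t)) = b :=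
    fun h => Fin.ext hbv.symm
  -- membership in the fiber
  have genmem : ∀ z : Fin (3 * t) → ZMod 3,
      (∀ k : Fin (3 * t), k ≠ c → k ≠ a → k ≠ b → z k = x k) →
      z c + z a + z b = x c + x a + x b → z ∈ sigmaFiber t μ := by
    intro z hoff hblk j'
    by_cases hj' : j' = j
    · subst hj'
      have hxj := hx j'
      simp only [ec, ea, eb] at hxj ⊢
      rw [hblk, hxj]
    · have hjv : j'.1 ≠ j.1 := fun h => hj' (Fin.ext h)
      have hj2 := j'.2
      have h1 : (⟨3 * j'.1, by omega⟩ : Fin (3 * t)) ≠ c ∧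
          (⟨3 * j'.1, by omega⟩ : Fin (3 * t)) ≠ a ∧
          (⟨3 * j'.1, by omega⟩ : Fin (3 * t)) ≠ b := by
        refine ⟨?_, ?_, ?_⟩ <;> (simp only [ne_eq, Fin.ext_iff]; omega)
      have h2 : (⟨3 * j'.1 + 1, by omega⟩ : Fin (3 * t)) ≠ c ∧
          (⟨3 * j'.1 + 1, by omega⟩ : Fin (3 * t)) ≠ a ∧
          (⟨3 * j'.1 + 1, by omega⟩ : Fin (3 * t)) ≠ b := by
        refine ⟨?_, ?_, ?_⟩ <;> (simp only [ne_eq, Fin.ext_iff]; omega)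
      have h3 : (⟨3 * j'.1 + 2, by omega⟩ : Fin (3 * t)) ≠ c ∧
          (⟨3 * j'.1 + 2, by omega⟩ : Fin (3 * t)) ≠ a ∧
          (⟨3 * j'.1 + 2, by omega⟩ : Fin (3 * t)) ≠ b := by
        refine ⟨?_, ?_, ?_⟩ <;> (simp only [ne_eq, Fin.ext_iff]; omega)
      have hxj := hx j'
      show z ⟨3 * j'.1, by omega⟩ + z ⟨3 * j'.1 + 1, by omega⟩ + z ⟨3 * j'.1 + 2, by omega⟩ = μ j'
      rw [hoff _ h1.1 h1.2.1 h1.2.2, hoff _ h2.1 h2.2.1 h2.2.2, hoff _ h3.1 h3.2.1 h3.2.2]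
      exact hxj
  have hy1mem : y1 ∈ sigmaFiber t μ := by
    apply genmem
    · intro k h1 h2 h3; exact hy1k k h2 h3
    · rw [hy1k c hca hcb, hy1a, hy1b]; exact sum12 _ _ _
  have hy2mem : y2 ∈ sigmaFiber t μ := by
    apply genmem
    · intro k h1 h2 h3; exact hy2k k h2 h3
    · rw [hy2k c hca hcb, hy2a, hy2b]; exact sum21 _ _ _
  have hx'mem : x' ∈ sigmaFiber t μ := by
    apply genmem _ hx'k
    rw [hx'c, hx'a, hx'b]
    exact sum111 _ _ _
  -- Hamming distances
  have d_xy1 : hammingDist x y1 = 2 := by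
    apply ham_two _ _ a b hab
    intro k
    by_cases h1 : k = a
    · subst h1; simp [hy1a, plus1]
    by_cases h2 : k = b
    · subst h2; simp [hy1b, plus2, h1]
    · simp [hy1k k h1 h2, h1, h2]
  have d_xy2 : hammingDist x y2 = 2 := by
    apply ham_two _ _ a b hab
    intro k
    by_cases h1 : k = a
    · subst h1; simp [hy2a, plus2]
    by_cases h2 : k = b
    · subst h2; simp [hy2b, plus1, h1]
    · simp [hy2k k h1 h2, h1, h2]
  have d_y1y2 : hammingDist y1 y2 = 2 := by
    apply ham_two _ _ a b hab
    intro k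
    by_cases h1 : k = a
    · subst h1; simp [hy1a, hy2a, p12]
    by_cases h2 : k = b
    · subst h2; simp [hy1b, hy2b, p21, h1]
    · simp [hy1k k h1 h2, hy2k k h1 h2, h1, h2]
  have d_x'y1 : hammingDist x' y1 = 2 := by
    apply ham_two _ _ c b hcb
    intro k
    by_cases h0 : k = c
    · subst h0; simp [hx'c, hy1k _ hca hcb, plus1, hca, hcb]
    by_cases h1 : k = a
    · subst h1; simp [hx'a, hy1a, Ne.symm hca, hab]
    by_cases h2 : k = b
    · subst h2; simp [hx'b, hy1b, p12, h0]
    · simp [hx'k k h0 h1 h2, hy1k k h1 h2, h0, h2]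
  have d_x'y2 : hammingDist x' y2 = 2 := by
    apply ham_two _ _ c a hca
    intro k
    by_cases h0 : k = c
    · subst h0; simp [hx'c, hy2k _ hca hcb, plus1, hca, hcb]
    by_cases h1 : k = a
    · subst h1; simp [hx'a, hy2a, p12, h0]
    by_cases h2 : k = b
    · subst h2; simp [hx'b, hy2b, Ne.symm hab, h0, hab]
    · simp [hx'k k h0 h1 h2, hy2k k h1 h2, h0, h1]
  exact zmod3_aux (lam x') (lam y1) (lam y2) (lam x)
    (hlam x' hx'mem y1 hy1mem d_x'y1) (hlam x' hx'mem y2 hy2mem d_x'y2)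
    (hlam x hx y1 hy1mem d_xy1) (hlam x hx y2 hy2mem d_xy2)
    (hlam y1 hy1mem y2 hy2mem d_y1y2)
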